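/- Let (K,|·|) be a normed field, f ∈ K[z] a polynomial of degree n ≥ 2 having n simple zeros in K, ξ ∈ Kⁿ a root-vector of f, 1 ≤ p ≤ ∞ with conjugate exponent q, and 0 < h < 1. Let sep(f) = min_{i≠j} |ξ_i − ξ_j|. Suppose the initial guess x⁰ ∈ Kⁿ satisfies ‖x⁰ − ξ‖_p ≤ ρ, where ρ = R(n,p,h) · sep(f) and R(n,p,h) = ((1+h)^{1/(n−1)} − 1)/(2^{1/q}((1+h)^{1/(n−1)} − 1) + (n−1)^{−1/p}). Then the Weierstrass iteration x^{k+1} = x^k − W(x^k) is well defined, converges to ξ, and for all k ≥ 0: |x^{k+1}_i − ξ_i| ≤ h^{2^k} |x^k_i − ξ_i| and |x^k_i − ξ_i| ≤ h^{2^k − 1} |x⁰_i − ξ_i| for each i, and ‖x^k − ξ‖_p ≤ ρ · h^{2^k − 1}. -/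

import Mathlib

open Finset Filter Topology
open scoped ENNReal

noncomputable def pnorm {n : ℕ} (p : ℝ≥0∞) (v : Fin n → ℝ) : ℝ :=
  if p = ⊤ then ⨆ i, |v i| else (∑ i, |v i| ^ p.toReal) ^ (1 / p.toReal)

noncomputable def epow (a : ℝ) (p : ℝ≥0∞) : ℝ :=
  if p = ⊤ then 1 else a ^ (1 / p.toReal)

noncomputable def dsep {K : Type*} [NormedField K] {n : ℕ} (x : Fin n → K) (i : Fin n) : ℝ :=
  sInf {r : ℝ | ∃ j, j ≠ i ∧ r = ‖x i - x j‖}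

noncomputable def Wcorr {K : Type*} [NormedField K] {n : ℕ} (f : Polynomial K)
    (x : Fin n → K) (i : Fin n) : K :=
  Polynomial.eval (x i) f / (f.leadingCoeff * ∏ j ∈ Finset.univ.erase i, (x i - x j))

def IsRootVector {K : Type*} [NormedField K] {n : ℕ} (f : Polynomial K) (ξ : Fin n → K) : Prop :=
  ∀ z : K, Polynomial.eval z f = f.leadingCoeff * ∏ i, (z - ξ i)

section helpers

lemma epow_nonneg {a : ℝ} (ha : 0 ≤ a) (p : ℝ≥0∞) : 0 ≤ epow a p := by
  unfold epow; split
  · norm_num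
  · exact Real.rpow_nonneg ha _

lemma epow_pos {a : ℝ} (ha : 0 < a) (p : ℝ≥0∞) : 0 < epow a p := by
  unfold epow; split
  · norm_num
  · exact Real.rpow_pos_of_pos ha _

lemma pnorm_nonneg {n : ℕ} (p : ℝ≥0∞) (v : Fin n → ℝ) : 0 ≤ pnorm p v := by
  unfold pnorm; split
  · exact Real.iSup_nonneg fun i => abs_nonneg _
  · exact Real.rpow_nonneg (Finset.sum_nonneg fun i _ => Real.rpow_nonneg (abs_nonneg _) _) _

/-- norm bound `‖∏ (1+c_j) - 1‖ ≤ ∏(1+‖c_j‖) - 1`. -/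
lemma norm_prod_one_add_sub_one {K : Type*} [NormedField K] {ι : Type*} (s : Finset ι)
    (c : ι → K) : ‖∏ j ∈ s, (1 + c j) - 1‖ ≤ ∏ j ∈ s, (1 + ‖c j‖) - 1 := by
  induction s using Finset.cons_induction with
  | empty => simp
  | cons a s ha ih =>
    rw [Finset.prod_cons, Finset.prod_cons]
    have hprod1 : (1:ℝ) ≤ ∏ j ∈ s, (1 + ‖c j‖) := by
      calc (1:ℝ) = ∏ _j ∈ s, 1 := by simp
        _ ≤ ∏ j ∈ s, (1 + ‖c j‖) :=
          Finset.prod_le_prod (by intros; norm_num)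
            (fun j _ => le_add_of_nonneg_right (norm_nonneg _))
    have key : (1 + c a) * ∏ j ∈ s, (1 + c j) - 1
        = (1 + c a) * (∏ j ∈ s, (1 + c j) - 1) + c a := by ring
    rw [key]
    have h1ca : ‖1 + c a‖ ≤ 1 + ‖c a‖ := by
      calc ‖1 + c a‖ ≤ ‖(1:K)‖ + ‖c a‖ := norm_add_le _ _
        _ = 1 + ‖c a‖ := by rw [norm_one]
    calc ‖(1 + c a) * (∏ j ∈ s, (1 + c j) - 1) + c a‖
        ≤ ‖(1 + c a) * (∏ j ∈ s, (1 + c j) - 1)‖ + ‖c a‖ := norm_add_le _ _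
      _ = ‖1 + c a‖ * ‖∏ j ∈ s, (1 + c j) - 1‖ + ‖c a‖ := by rw [norm_mul]
      _ ≤ (1 + ‖c a‖) * (∏ j ∈ s, (1 + ‖c j‖) - 1) + ‖c a‖ := by
          have := norm_nonneg (∏ j ∈ s, (1 + c j) - 1)
          have h2 : (0:ℝ) ≤ 1 + ‖c a‖ := by positivity
          nlinarith [mul_le_mul h1ca ih (norm_nonneg _) h2]
      _ = (1 + ‖c a‖) * ∏ j ∈ s, (1 + ‖c j‖) - 1 := by ring

/-- AM-GM: `∏ (1+w_j) ≤ (1 + S/m)^m`. -/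
lemma prod_one_add_le_pow {ι : Type*} (s : Finset ι) (w : ι → ℝ)
    (hw : ∀ j ∈ s, 0 ≤ w j) (hs : s.Nonempty) :
    ∏ j ∈ s, (1 + w j) ≤ (1 + (∑ j ∈ s, w j) / s.card) ^ s.card := by
  have hm : 0 < (s.card : ℝ) := by exact_mod_cast Finset.card_pos.mpr hs
  have hz : ∀ j ∈ s, (0:ℝ) ≤ 1 + w j := fun j hj => by linarith [hw j hj]
  have hgm := Real.geom_mean_le_arith_mean_weighted s (fun _ => 1 / s.card)
    (fun j => 1 + w j) (fun j _ => by positivity) (by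
      rw [Finset.sum_const, nsmul_eq_mul]
      field_simp) hz
  have hL : ∏ j ∈ s, (1 + w j) ^ ((1:ℝ) / s.card)
      = (∏ j ∈ s, (1 + w j)) ^ ((1:ℝ) / s.card) :=
    Real.finset_prod_rpow s _ hz _
  have hR : ∑ j ∈ s, (1 / (s.card:ℝ)) * (1 + w j)
      = 1 + (∑ j ∈ s, w j) / s.card := by
    rw [← Finset.mul_sum, Finset.sum_add_distrib, Finset.sum_const, nsmul_eq_mul]
    field_simp
  rw [hL, hR] at hgm
  have hP : (0:ℝ) ≤ ∏ j ∈ s, (1 + w j) := Finset.prod_nonneg hz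
  calc ∏ j ∈ s, (1 + w j) = ((∏ j ∈ s, (1 + w j)) ^ ((1:ℝ)/s.card)) ^ (s.card:ℝ) := by
        rw [← Real.rpow_mul hP, show (1:ℝ)/s.card * s.card = 1 by field_simp, Real.rpow_one]
    _ ≤ (1 + (∑ j ∈ s, w j) / s.card) ^ (s.card:ℝ) :=
        Real.rpow_le_rpow (Real.rpow_nonneg hP _) hgm (le_of_lt hm)
    _ = (1 + (∑ j ∈ s, w j) / s.card) ^ s.card := Real.rpow_natCast _ _

/-- convexity: `(1+θt)^m ≤ 1 + θ((1+t)^m - 1)` for `θ ∈ [0,1]`, `t ≥ 0`. -/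
lemma pow_one_add_mul_le {t θ : ℝ} (ht : 0 ≤ t) (hθ0 : 0 ≤ θ) (hθ1 : θ ≤ 1) (m : ℕ) :
    (1 + θ * t) ^ m ≤ 1 + θ * ((1 + t) ^ m - 1) := by
  have hcv := (convexOn_pow m).2 (Set.mem_Ici.mpr (zero_le_one))
    (Set.mem_Ici.mpr (by linarith : (0:ℝ) ≤ 1 + t))
    (by linarith : 0 ≤ 1 - θ) hθ0 (by ring)
  simp only [smul_eq_mul] at hcv
  have : (1 - θ) * 1 + θ * (1 + t) = 1 + θ * t := by ring
  rw [this, one_pow] at hcv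
  linarith

lemma conj_cases (p q : ℝ≥0∞) (hp : 1 ≤ p) (hpq : 1 / p + 1 / q = 1) :
    (p = ⊤ ∧ q = 1) ∨ (p = 1 ∧ q = ⊤) ∨
    (p ≠ ⊤ ∧ q ≠ ⊤ ∧ 1 < p.toReal ∧ 1 < q.toReal ∧
      1 / p.toReal + 1 / q.toReal = 1) := by
  by_cases hpt : p = ⊤
  · left
    refine ⟨hpt, ?_⟩
    subst hpt
    simp only [one_div, ENNReal.inv_top, zero_add] at hpq
    rwa [ENNReal.inv_eq_one] at hpq
  by_cases hp1 : p = 1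
  · right; left
    refine ⟨hp1, ?_⟩
    subst hp1
    simp only [one_div, inv_one] at hpq
    have : (1:ℝ≥0∞) + q⁻¹ = 1 + 0 := by simpa using hpq
    have hq0 : q⁻¹ = 0 := by
      exact (ENNReal.add_right_inj (by simp)).mp this
    rwa [ENNReal.inv_eq_zero] at hq0
  · right; right
    have hplt : 1 < p := lt_of_le_of_ne hp (Ne.symm hp1)
    have hp0 : p ≠ 0 := by intro h0; rw [h0] at hp; simp at hp
    have hqt : q ≠ ⊤ := by
      intro hqT
      rw [hqT] at hpq
      simp only [one_div, ENNReal.inv_top, add_zero] at hpq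
      rw [ENNReal.inv_eq_one] at hpq
      exact hp1 hpq
    have hq0 : q ≠ 0 := by
      intro h0
      rw [h0] at hpq
      simp only [one_div, ENNReal.inv_zero] at hpq
      simp at hpq
    have hfin1 : (1/p) ≠ ⊤ := by simp [one_div, ENNReal.inv_ne_top, hp0]
    have hfin2 : (1/q) ≠ ⊤ := by simp [one_div, ENNReal.inv_ne_top, hq0]
    have hreal : (1/p).toReal + (1/q).toReal = 1 := by
      rw [← ENNReal.toReal_add hfin1 hfin2, hpq, ENNReal.toReal_one]
    rw [one_div, one_div, ENNReal.toReal_inv, ENNReal.toReal_inv] at hreal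
    have hp1R : 1 < p.toReal := by
      have := (ENNReal.toReal_lt_toReal (by simp) hpt).mpr hplt
      simpa using this
    have hpR0 : 0 < p.toReal := by linarith
    have hqinv : 0 < q.toReal⁻¹ := by
      have h1 : p.toReal⁻¹ < 1 := by
        rw [inv_lt_one_iff₀]; right; exact hp1R
      linarith
    have hqR0 : 0 < q.toReal := by
      by_contra hle
      push_neg at hle
      have : q.toReal⁻¹ ≤ 0 := inv_nonpos.mpr hle
      linarith
    have hq1R : 1 < q.toReal := by
      have h1 : q.toReal⁻¹ < 1 := by
        have h2 : 0 < p.toReal⁻¹ := by positivity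
        linarith
      rw [inv_lt_one_iff₀] at h1
      rcases h1 with h | h
      · linarith
      · exact h
    exact ⟨hpt, hqt, hp1R, hq1R, by rw [one_div, one_div]; linarith⟩

lemma pnorm_scale_le {n : ℕ} (hn : n ≠ 0) (p : ℝ≥0∞) (hp : 1 ≤ p) {v w : Fin n → ℝ}
    (hv : ∀ i, 0 ≤ v i) (hw : ∀ i, 0 ≤ w i) {c : ℝ} (hc : 0 ≤ c)
    (hle : ∀ i, v i ≤ c * w i) : pnorm p v ≤ c * pnorm p w := by
  haveI : Nonempty (Fin n) := Fin.pos_iff_nonempty.mp (Nat.pos_of_ne_zero hn)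
  unfold pnorm
  split
  · apply ciSup_le
    intro i
    rw [abs_of_nonneg (hv i)]
    calc v i ≤ c * w i := hle i
      _ = c * |w i| := by rw [abs_of_nonneg (hw i)]
      _ ≤ c * ⨆ j, |w j| := by
          have : |w i| ≤ ⨆ j, |w j| :=
            le_ciSup (f := fun j => |w j|) (Set.Finite.bddAbove (Set.finite_range _)) i
          exact mul_le_mul_of_nonneg_left this hc
  · rename_i hpt
    have hr : 0 < p.toReal :=
      ENNReal.toReal_pos (by intro h0; rw [h0] at hp; simp at hp) hpt
    set r := p.toReal with hrdef
    have key : ∑ i, |v i| ^ r ≤ c ^ r * ∑ i, |w i| ^ r := by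
      rw [Finset.mul_sum]
      apply Finset.sum_le_sum
      intro i _
      rw [abs_of_nonneg (hv i), abs_of_nonneg (hw i)]
      calc v i ^ r ≤ (c * w i) ^ r := Real.rpow_le_rpow (hv i) (hle i) hr.le
        _ = c ^ r * w i ^ r := Real.mul_rpow hc (hw i)
    calc (∑ i, |v i| ^ r) ^ (1/r)
        ≤ (c ^ r * ∑ i, |w i| ^ r) ^ (1/r) := by
          apply Real.rpow_le_rpow (Finset.sum_nonneg fun i _ => Real.rpow_nonneg (abs_nonneg _) _) key
          positivity
      _ = c * (∑ i, |w i| ^ r) ^ (1/r) := by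
          rw [Real.mul_rpow (Real.rpow_nonneg hc _)
            (Finset.sum_nonneg fun i _ => Real.rpow_nonneg (abs_nonneg _) _),
            one_div, Real.rpow_rpow_inv hc hr.ne']

lemma holder_sum {n : ℕ} (hn : n ≠ 0) (p q : ℝ≥0∞) (hp : 1 ≤ p) (hpq : 1 / p + 1 / q = 1)
    (s : Finset (Fin n)) (w : Fin n → ℝ) (hw : ∀ i, 0 ≤ w i) :
    ∑ j ∈ s, w j ≤ epow s.card q * pnorm p w := by
  haveI : Nonempty (Fin n) := Fin.pos_iff_nonempty.mp (Nat.pos_of_ne_zero hn)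
  rcases conj_cases p q hp hpq with ⟨hpt, hq1⟩ | ⟨hp1, hqt⟩ | ⟨hpt, hqt, hp1, hq1, hreal⟩
  · subst hpt; subst hq1
    have he : epow (s.card : ℝ) 1 = (s.card : ℝ) := by
      unfold epow
      rw [if_neg (by simp)]
      simp
    rw [he]
    unfold pnorm
    rw [if_pos rfl]
    calc ∑ j ∈ s, w j ≤ ∑ _j ∈ s, ⨆ i, |w i| := by
          apply Finset.sum_le_sum
          intro j _
          calc w j = |w j| := (abs_of_nonneg (hw j)).symm
            _ ≤ ⨆ i, |w i| := le_ciSup (f := fun i => |w i|) (Set.Finite.bddAbove (Set.finite_range _)) j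
      _ = s.card * ⨆ i, |w i| := by rw [Finset.sum_const, nsmul_eq_mul]
  · subst hp1; subst hqt
    have he : epow (s.card : ℝ) ⊤ = 1 := by unfold epow; rw [if_pos rfl]
    rw [he, one_mul]
    unfold pnorm
    rw [if_neg (by simp)]
    simp only [ENNReal.toReal_one, Real.rpow_one, div_one]
    calc ∑ j ∈ s, w j = ∑ j ∈ s, |w j| := by
          apply Finset.sum_congr rfl
          intro j _
          rw [abs_of_nonneg (hw j)]
      _ ≤ ∑ i, |w i| :=
          Finset.sum_le_sum_of_subset_of_nonneg (Finset.subset_univ s)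
            (fun i _ _ => abs_nonneg _)
  · set r := p.toReal with hrdef
    set t := q.toReal with htdef
    have hr0 : 0 < r := by linarith
    have ht0 : 0 < t := by linarith
    rcases s.eq_empty_or_nonempty with rfl | hs
    · simp only [Finset.sum_empty, Finset.card_empty, Nat.cast_zero]
      exact mul_nonneg (epow_nonneg le_rfl _) (pnorm_nonneg _ _)
    · have hm : 0 < ((s.card : ℕ) : ℝ) := by
        exact_mod_cast Finset.card_pos.mpr hs
      set m : ℝ := (s.card : ℝ) with hmdef
      have hS : 0 ≤ ∑ j ∈ s, w j := Finset.sum_nonneg fun j _ => hw j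
      have hTs : 0 ≤ ∑ j ∈ s, w j ^ r :=
        Finset.sum_nonneg fun j _ => Real.rpow_nonneg (hw j) _
      have hJ : ((∑ j ∈ s, w j) / m) ^ r ≤ (∑ j ∈ s, w j ^ r) / m := by
        have hjen := Real.rpow_arith_mean_le_arith_mean_rpow s (fun _ => 1/m) w
          (fun _ _ => by positivity)
          (by rw [Finset.sum_const, nsmul_eq_mul]; field_simp; rfl)
          (fun j _ => hw j) hp1.le
        rw [← Finset.mul_sum, ← Finset.mul_sum, one_div, inv_mul_eq_div, inv_mul_eq_div] at hjen
        exact hjen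
      have h2 : (∑ j ∈ s, w j) / m ≤ ((∑ j ∈ s, w j ^ r) / m) ^ (1/r) := by
        have h3 := Real.rpow_le_rpow (by positivity) hJ (by positivity : (0:ℝ) ≤ 1/r)
        rw [one_div, Real.rpow_rpow_inv (by positivity) hr0.ne'] at h3
        rwa [one_div]
      have hsub : ∑ j ∈ s, w j ^ r ≤ ∑ i, |w i| ^ r := by
        calc ∑ j ∈ s, w j ^ r = ∑ j ∈ s, |w j| ^ r := by
              apply Finset.sum_congr rfl
              intro j _
              rw [abs_of_nonneg (hw j)]
          _ ≤ ∑ i, |w i| ^ r :=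
              Finset.sum_le_sum_of_subset_of_nonneg (Finset.subset_univ s)
                (fun i _ _ => Real.rpow_nonneg (abs_nonneg _) _)
      calc ∑ j ∈ s, w j = m * ((∑ j ∈ s, w j) / m) := by field_simp
        _ ≤ m * ((∑ j ∈ s, w j ^ r) / m) ^ (1/r) :=
            mul_le_mul_of_nonneg_left h2 hm.le
        _ = m * ((∑ j ∈ s, w j ^ r) ^ (1/r) / m ^ (1/r)) := by
            rw [Real.div_rpow hTs hm.le]
        _ = (m / m ^ (1/r)) * (∑ j ∈ s, w j ^ r) ^ (1/r) := by ring
        _ = m ^ (1/t) * (∑ j ∈ s, w j ^ r) ^ (1/r) := by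
            rw [show (1:ℝ)/t = 1 - 1/r by linarith, Real.rpow_sub hm, Real.rpow_one]
        _ ≤ m ^ (1/t) * (∑ i, |w i| ^ r) ^ (1/r) := by
            apply mul_le_mul_of_nonneg_left _ (Real.rpow_nonneg hm.le _)
            exact Real.rpow_le_rpow hTs hsub (by positivity)
        _ = epow s.card q * pnorm p w := by
            unfold epow pnorm
            rw [if_neg hqt, if_neg hpt]

lemma epow_mul_epow {a : ℝ} (ha : 0 < a) (p q : ℝ≥0∞) (hp : 1 ≤ p)
    (hpq : 1 / p + 1 / q = 1) : epow a q * epow a p = a := by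
  rcases conj_cases p q hp hpq with ⟨hpt, hq1⟩ | ⟨hp1, hqt⟩ | ⟨hpt, hqt, hp1, hq1, hreal⟩
  · subst hpt; subst hq1
    unfold epow
    rw [if_neg (by simp), if_pos rfl]
    simp
  · subst hp1; subst hqt
    unfold epow
    rw [if_pos rfl, if_neg (by simp)]
    simp
  · unfold epow
    rw [if_neg hqt, if_neg hpt]
    rw [← Real.rpow_add ha]
    rw [show 1 / q.toReal + 1 / p.toReal = 1 by linarith, Real.rpow_one]

end helpers

set_option maxHeartbeats 1000000 in
/-- Dochev-type corollary. If `‖x⁰ − ξ‖_p ≤ ρ = R(n,p,h)·sep(f)` with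
`0 < h < 1`, then the Weierstrass iteration is well defined, converges to `ξ`, with
error estimates `|x^{k+1}_i − ξ_i| ≤ h^{2^k}|x^k_i − ξ_i|`,
`|x^k_i − ξ_i| ≤ h^{2^k−1}|x⁰_i − ξ_i|` and `‖x^k − ξ‖_p ≤ ρ h^{2^k−1}`. -/
theorem weierstrass_local_convergence_dochev
    {K : Type*} [NormedField K] {n : ℕ} (hn : 2 ≤ n)
    (f : Polynomial K) (hdeg : f.natDegree = n)
    (ξ : Fin n → K) (hroot : IsRootVector f ξ) (hξ : Function.Injective ξ)
    (p q : ℝ≥0∞) (hp : 1 ≤ p) (hpq : 1 / p + 1 / q = 1)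
    (h : ℝ) (hh : 0 < h) (hh1 : h < 1)
    (sep : ℝ) (hsep : sep = sInf {r : ℝ | ∃ i j : Fin n, i ≠ j ∧ r = ‖ξ i - ξ j‖})
    (ρ : ℝ)
    (hρ : ρ = ((1 + h) ^ ((1:ℝ) / ((n:ℝ) - 1)) - 1) /
      (epow 2 q * ((1 + h) ^ ((1:ℝ) / ((n:ℝ) - 1)) - 1) + 1 / epow ((n : ℝ) - 1) p) * sep)
    (x : ℕ → Fin n → K)
    (hinit : pnorm p (fun i => ‖x 0 i - ξ i‖) ≤ ρ)
    (hiter : ∀ k : ℕ, x (k+1) = fun i => x k i - Wcorr f (x k) i) :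
    (∀ k : ℕ, Function.Injective (x k)) ∧
    (∀ i : Fin n, Filter.Tendsto (fun k => x k i) Filter.atTop (nhds (ξ i))) ∧
    (∀ k : ℕ, ∀ i : Fin n, ‖x (k+1) i - ξ i‖ ≤ h ^ 2 ^ k * ‖x k i - ξ i‖) ∧
    (∀ k : ℕ, ∀ i : Fin n, ‖x k i - ξ i‖ ≤ h ^ (2 ^ k - 1) * ‖x 0 i - ξ i‖) ∧
    (∀ k : ℕ, pnorm p (fun i => ‖x k i - ξ i‖) ≤ ρ * h ^ (2 ^ k - 1)) := by
  have hn0 : n ≠ 0 := by omega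
  haveI : Nonempty (Fin n) := Fin.pos_iff_nonempty.mp (by omega)
  set m : ℕ := n - 1 with hm
  have hm1 : 1 ≤ m := by omega
  have hmc : ((m : ℕ) : ℝ) = (n : ℝ) - 1 := by
    have hnm : n = m + 1 := by omega
    rw [hnm]; push_cast; ring
  have hmpos : (0:ℝ) < (m : ℝ) := by exact_mod_cast hm1
  have hnR1 : (0:ℝ) < (n : ℝ) - 1 := by rw [← hmc]; exact hmpos
  -- the quantity τ
  set τ : ℝ := (1 + h) ^ ((1:ℝ) / ((n:ℝ) - 1)) - 1 with hτdef
  have hτpos : 0 < τ := by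
    have h1 : (1:ℝ) < (1 + h) ^ ((1:ℝ) / ((n:ℝ) - 1)) := by
      have h2 := Real.rpow_lt_rpow_of_exponent_lt (x := 1 + h) (by linarith)
        (show (0:ℝ) < 1 / ((n:ℝ) - 1) by positivity)
      simpa using h2
    simp only [hτdef]; linarith
  have hτpow : (1 + τ) ^ m = 1 + h := by
    have hb : (0:ℝ) ≤ 1 + h := by linarith
    have h1 : (1:ℝ) + τ = (1 + h) ^ ((1:ℝ) / ((n:ℝ) - 1)) := by rw [hτdef]; ring
    rw [h1, ← Real.rpow_natCast ((1 + h) ^ ((1:ℝ) / ((n:ℝ) - 1))) m, ← Real.rpow_mul hb,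
      hmc, show (1:ℝ) / ((n:ℝ) - 1) * ((n:ℝ) - 1) = 1 by field_simp, Real.rpow_one]
  set A : ℝ := epow 2 q with hAdef
  have hA0 : 0 ≤ A := epow_nonneg (by norm_num) q
  set C : ℝ := 1 / epow ((n : ℝ) - 1) p with hCdef
  have hC0 : 0 < C := by
    rw [hCdef]
    exact div_pos one_pos (epow_pos hnR1 p)
  have hD0 : 0 < A * τ + C := by positivity
  -- separation facts
  have hsepfin : {r : ℝ | ∃ i j : Fin n, i ≠ j ∧ r = ‖ξ i - ξ j‖}.Finite := by
    apply Set.Finite.subset (Set.Finite.image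
      (f := fun ij : Fin n × Fin n => ‖ξ ij.1 - ξ ij.2‖) Set.finite_univ)
    rintro r ⟨i, j, _, rfl⟩
    exact ⟨(i, j), trivial, rfl⟩
  have hsepne : {r : ℝ | ∃ i j : Fin n, i ≠ j ∧ r = ‖ξ i - ξ j‖}.Nonempty := by
    refine ⟨‖ξ ⟨0, by omega⟩ - ξ ⟨1, by omega⟩‖, ⟨0, by omega⟩, ⟨1, by omega⟩, ?_, rfl⟩
    intro hc
    exact absurd (congrArg Fin.val hc) (by simp)
  have hsepmem : sep ∈ {r : ℝ | ∃ i j : Fin n, i ≠ j ∧ r = ‖ξ i - ξ j‖} := by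
    rw [hsep]
    exact Set.Nonempty.csInf_mem hsepne hsepfin
  have hseppos : 0 < sep := by
    obtain ⟨i0, j0, hij0, heq⟩ := hsepmem
    rw [heq, norm_pos_iff]
    exact sub_ne_zero.mpr fun he => hij0 (hξ he)
  have hsep_le : ∀ i j : Fin n, i ≠ j → sep ≤ ‖ξ i - ξ j‖ := by
    intro i j hij
    rw [hsep]
    apply csInf_le
    · exact ⟨0, fun r ⟨a, b, _, hr⟩ => hr ▸ norm_nonneg _⟩
    · exact ⟨i, j, hij, rfl⟩
  have hρeq : ρ = τ / (A * τ + C) * sep := by rw [hρ]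
  have hρpos : 0 < ρ := by
    rw [hρeq]
    positivity
  have hρkey : C * ρ = τ * (sep - A * ρ) := by
    rw [hρeq]
    field_simp
    ring
  have hδpos : 0 < sep - A * ρ := by nlinarith [mul_pos hC0 hρpos]
  -- leading coefficient
  have ha : f.leadingCoeff ≠ 0 := by
    intro h0
    have hf0 : f = 0 := Polynomial.leadingCoeff_eq_zero.mp h0
    rw [hf0, Polynomial.natDegree_zero] at hdeg
    omega
  -- the one-step contraction lemma
  have step : ∀ θ : ℝ, 0 < θ → θ ≤ 1 → ∀ y : Fin n → K,
      pnorm p (fun i => ‖y i - ξ i‖) ≤ ρ * θ →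
      Function.Injective y ∧
      ∀ i, ‖y i - Wcorr f y i - ξ i‖ ≤ h * θ * ‖y i - ξ i‖ := by
    intro θ hθ0 hθ1 y hNp
    set u : Fin n → ℝ := fun i => ‖y i - ξ i‖ with hu
    have hu0 : ∀ i, 0 ≤ u i := fun i => norm_nonneg _
    have hAρθ : A * (ρ * θ) ≤ A * ρ :=
      mul_le_mul_of_nonneg_left (mul_le_of_le_one_right hρpos.le hθ1) hA0
    have hδθ : 0 < sep - A * (ρ * θ) := by linarith
    have hdist : ∀ i j : Fin n, i ≠ j → sep - A * (ρ * θ) ≤ ‖y i - y j‖ := by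
      intro i j hij
      have hpair : u i + u j ≤ A * (ρ * θ) := by
        have h1 := holder_sum hn0 p q hp hpq ({i, j} : Finset (Fin n)) u hu0
        rw [Finset.sum_pair hij, Finset.card_pair hij] at h1
        have h2 : epow ((2:ℕ) : ℝ) q = A := by norm_num [hAdef]
        rw [h2] at h1
        calc u i + u j ≤ A * pnorm p u := h1
          _ ≤ A * (ρ * θ) := mul_le_mul_of_nonneg_left hNp hA0
      have h3 : ‖ξ i - ξ j‖ ≤ ‖y i - y j‖ + (u i + u j) := by
        have hrw : ξ i - ξ j = -(y i - ξ i) + (y i - y j) + (y j - ξ j) := by ring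
        rw [hrw]
        calc ‖-(y i - ξ i) + (y i - y j) + (y j - ξ j)‖
            ≤ ‖-(y i - ξ i) + (y i - y j)‖ + ‖y j - ξ j‖ := norm_add_le _ _
          _ ≤ ‖-(y i - ξ i)‖ + ‖y i - y j‖ + ‖y j - ξ j‖ := by
              have := norm_add_le (-(y i - ξ i)) (y i - y j)
              linarith
          _ = ‖y i - y j‖ + (u i + u j) := by rw [norm_neg]; ring
      have h4 := hsep_le i j hij
      linarith
    have hinj : Function.Injective y := by
      intro i j hij
      by_contra hne
      have h5 := hdist i j hne
      rw [hij, sub_self, norm_zero] at h5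
      linarith
    refine ⟨hinj, fun i => ?_⟩
    set s : Finset (Fin n) := Finset.univ.erase i with hs
    have hcard : s.card = m := by
      rw [hs, Finset.card_erase_of_mem (Finset.mem_univ i), Finset.card_univ,
        Fintype.card_fin]
    have hsne : s.Nonempty := Finset.card_pos.mp (by omega)
    have hyne : ∀ j ∈ s, y i - y j ≠ 0 := by
      intro j hj
      have hji : j ≠ i := Finset.ne_of_mem_erase hj
      exact sub_ne_zero.mpr fun he => hji (hinj he).symm
    have hP : ∏ j ∈ s, (y i - y j) ≠ 0 := Finset.prod_ne_zero_iff.mpr hyne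
    have hW : Wcorr f y i = (y i - ξ i) * ∏ j ∈ s, ((y i - ξ j) / (y i - y j)) := by
      unfold Wcorr
      rw [← hs, hroot (y i),
        ← Finset.mul_prod_erase Finset.univ (fun k => y i - ξ k) (Finset.mem_univ i), ← hs,
        Finset.prod_div_distrib]
      field_simp
    have herr : y i - Wcorr f y i - ξ i
        = -((y i - ξ i) * (∏ j ∈ s, (1 + (y j - ξ j) / (y i - y j)) - 1)) := by
      rw [hW]
      have hfac : ∀ j ∈ s, (y i - ξ j) / (y i - y j) = 1 + (y j - ξ j) / (y i - y j) := by
        intro j hj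
        have hne := hyne j hj
        field_simp
        ring
      rw [Finset.prod_congr rfl hfac]
      ring
    have hbound : ‖∏ j ∈ s, (1 + (y j - ξ j) / (y i - y j)) - 1‖ ≤ h * θ := by
      have h1 := norm_prod_one_add_sub_one s (fun j => (y j - ξ j) / (y i - y j))
      have hterm : ∀ j ∈ s, ‖(y j - ξ j) / (y i - y j)‖ ≤ u j / (sep - A * (ρ * θ)) := by
        intro j hj
        have hji : j ≠ i := Finset.ne_of_mem_erase hj
        rw [norm_div]
        apply div_le_div_of_nonneg_left (hu0 j) hδθ
        exact hdist i j (Ne.symm hji)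
      have hsumle : ∑ j ∈ s, u j ≤ ((n:ℝ) - 1) * C * (ρ * θ) := by
        have h2 := holder_sum hn0 p q hp hpq s u hu0
        rw [hcard, hmc] at h2
        have h3 : epow ((n:ℝ) - 1) q = ((n:ℝ) - 1) * C := by
          rw [hCdef, mul_one_div, eq_div_iff (epow_pos hnR1 p).ne']
          exact epow_mul_epow hnR1 p q hp hpq
        rw [h3] at h2
        calc ∑ j ∈ s, u j ≤ ((n:ℝ) - 1) * C * pnorm p u := h2
          _ ≤ ((n:ℝ) - 1) * C * (ρ * θ) := by
              apply mul_le_mul_of_nonneg_left hNp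
              positivity
      have hsum : (∑ j ∈ s, u j / (sep - A * (ρ * θ))) / (m : ℝ) ≤ θ * τ := by
        rw [← Finset.sum_div, div_div, div_le_iff₀ (by positivity)]
        have hkey2 : C * ρ ≤ τ * (sep - A * (ρ * θ)) := by
          rw [hρkey]
          apply mul_le_mul_of_nonneg_left _ hτpos.le
          linarith
        calc ∑ j ∈ s, u j ≤ ((n:ℝ) - 1) * C * (ρ * θ) := hsumle
          _ = (m:ℝ) * θ * (C * ρ) := by rw [hmc]; ring
          _ ≤ (m:ℝ) * θ * (τ * (sep - A * (ρ * θ))) := by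
              apply mul_le_mul_of_nonneg_left hkey2
              positivity
          _ = θ * τ * ((sep - A * (ρ * θ)) * (m:ℝ)) := by ring
      have hprod : ∏ j ∈ s, (1 + ‖(y j - ξ j) / (y i - y j)‖) ≤ 1 + θ * h := by
        calc ∏ j ∈ s, (1 + ‖(y j - ξ j) / (y i - y j)‖)
            ≤ ∏ j ∈ s, (1 + u j / (sep - A * (ρ * θ))) := by
              apply Finset.prod_le_prod
              · intro j _; positivity
              · intro j hj; linarith [hterm j hj]
          _ ≤ (1 + (∑ j ∈ s, u j / (sep - A * (ρ * θ))) / s.card) ^ s.card :=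
              prod_one_add_le_pow s _ (fun j _ => by positivity) hsne
          _ ≤ (1 + θ * τ) ^ s.card := by
              apply pow_le_pow_left₀ (by positivity)
              rw [hcard]
              linarith [hsum]
          _ = (1 + θ * τ) ^ m := by rw [hcard]
          _ ≤ 1 + θ * ((1 + τ) ^ m - 1) :=
              pow_one_add_mul_le hτpos.le hθ0.le hθ1 m
          _ = 1 + θ * h := by rw [hτpow]; ring
      calc ‖∏ j ∈ s, (1 + (y j - ξ j) / (y i - y j)) - 1‖
          ≤ ∏ j ∈ s, (1 + ‖(y j - ξ j) / (y i - y j)‖) - 1 := h1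
        _ ≤ h * θ := by linarith [hprod]
    rw [herr, norm_neg, norm_mul]
    calc ‖y i - ξ i‖ * ‖∏ j ∈ s, (1 + (y j - ξ j) / (y i - y j)) - 1‖
        ≤ ‖y i - ξ i‖ * (h * θ) := mul_le_mul_of_nonneg_left hbound (norm_nonneg _)
      _ = h * θ * ‖y i - ξ i‖ := by ring
  -- main induction
  have hone : ∀ k : ℕ, (1:ℕ) ≤ 2 ^ k := fun k => Nat.one_le_two_pow
  have hθle1 : ∀ k : ℕ, h ^ (2 ^ k - 1) ≤ 1 := fun k => pow_le_one₀ hh.le hh1.le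
  have hexp : ∀ k : ℕ, h * h ^ (2 ^ k - 1) = h ^ 2 ^ k := by
    intro k
    conv_rhs => rw [show 2 ^ k = (2 ^ k - 1) + 1 by have := hone k; omega]
    rw [pow_succ]
    ring
  have key : ∀ k : ℕ, pnorm p (fun i => ‖x k i - ξ i‖) ≤ ρ * h ^ (2 ^ k - 1) := by
    intro k
    induction k with
    | zero => simpa using hinit
    | succ k ih =>
      obtain ⟨hinjk, hbk⟩ := step (h ^ (2 ^ k - 1)) (pow_pos hh _) (hθle1 k) (x k) ih
      have hcomp : ∀ i, ‖x (k+1) i - ξ i‖ ≤ h ^ 2 ^ k * ‖x k i - ξ i‖ := by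
        intro i
        have hx : x (k+1) i = x k i - Wcorr f (x k) i := by rw [hiter k]
        rw [hx]
        calc ‖x k i - Wcorr f (x k) i - ξ i‖
            ≤ h * h ^ (2 ^ k - 1) * ‖x k i - ξ i‖ := hbk i
          _ = h ^ 2 ^ k * ‖x k i - ξ i‖ := by rw [hexp k]
      have hmono := pnorm_scale_le hn0 p hp (fun i => norm_nonneg _)
        (fun i => norm_nonneg _) (pow_nonneg hh.le (2 ^ k)) hcomp
      calc pnorm p (fun i => ‖x (k+1) i - ξ i‖)
          ≤ h ^ 2 ^ k * pnorm p (fun i => ‖x k i - ξ i‖) := hmono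
        _ ≤ h ^ 2 ^ k * (ρ * h ^ (2 ^ k - 1)) := by
            apply mul_le_mul_of_nonneg_left ih
            positivity
        _ = ρ * h ^ (2 ^ (k+1) - 1) := by
            rw [show 2 ^ (k+1) - 1 = 2 ^ k + (2 ^ k - 1) by
              have := hone k; rw [pow_succ]; omega, pow_add]
            ring
  have est3 : ∀ k : ℕ, ∀ i : Fin n, ‖x (k+1) i - ξ i‖ ≤ h ^ 2 ^ k * ‖x k i - ξ i‖ := by
    intro k i
    obtain ⟨_, hbk⟩ := step (h ^ (2 ^ k - 1)) (pow_pos hh _) (hθle1 k) (x k) (key k)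
    have hx : x (k+1) i = x k i - Wcorr f (x k) i := by rw [hiter k]
    rw [hx]
    calc ‖x k i - Wcorr f (x k) i - ξ i‖
        ≤ h * h ^ (2 ^ k - 1) * ‖x k i - ξ i‖ := hbk i
      _ = h ^ 2 ^ k * ‖x k i - ξ i‖ := by rw [hexp k]
  have est4 : ∀ k : ℕ, ∀ i : Fin n, ‖x k i - ξ i‖ ≤ h ^ (2 ^ k - 1) * ‖x 0 i - ξ i‖ := by
    intro k
    induction k with
    | zero => intro i; simp
    | succ k ih =>
      intro i
      calc ‖x (k+1) i - ξ i‖ ≤ h ^ 2 ^ k * ‖x k i - ξ i‖ := est3 k i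
        _ ≤ h ^ 2 ^ k * (h ^ (2 ^ k - 1) * ‖x 0 i - ξ i‖) := by
            apply mul_le_mul_of_nonneg_left (ih i)
            positivity
        _ = h ^ (2 ^ (k+1) - 1) * ‖x 0 i - ξ i‖ := by
            rw [show 2 ^ (k+1) - 1 = 2 ^ k + (2 ^ k - 1) by
              have := hone k; rw [pow_succ]; omega, pow_add]
            ring
  refine ⟨?_, ?_, est3, est4, key⟩
  · intro k
    exact (step (h ^ (2 ^ k - 1)) (pow_pos hh _) (hθle1 k) (x k) (key k)).1
  · intro i
    have hsq : ∀ k : ℕ, ‖x k i - ξ i‖ ≤ ‖x 0 i - ξ i‖ * h ^ k := by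
      intro k
      calc ‖x k i - ξ i‖ ≤ h ^ (2 ^ k - 1) * ‖x 0 i - ξ i‖ := est4 k i
        _ ≤ h ^ k * ‖x 0 i - ξ i‖ := by
            apply mul_le_mul_of_nonneg_right _ (norm_nonneg _)
            apply pow_le_pow_of_le_one hh.le hh1.le
            have := Nat.lt_two_pow_self (n := k)
            omega
        _ = ‖x 0 i - ξ i‖ * h ^ k := by ring
    have h0 : Filter.Tendsto (fun k : ℕ => ‖x 0 i - ξ i‖ * h ^ k) Filter.atTop (nhds 0) := by
      rw [show (0:ℝ) = ‖x 0 i - ξ i‖ * 0 by ring]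
      exact (tendsto_pow_atTop_nhds_zero_of_lt_one hh.le hh1).const_mul _
    have hz := squeeze_zero_norm hsq h0
    have := hz.add_const (ξ i)
    simpa using this
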